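/- Let f : S → E be a strictly increasing function from a set of epsilon numbers into the epsilon numbers, and let y be an ordinal with Ep(y) ⊆ S. Then y is an epsilon number if and only if y[f] is an epsilon number. -/

import Mathlib

open Ordinal

/-- An ordinal is an epsilon number if it is a fixed point of `ω ^ ·`. -/
def IsEpsilon (x : Ordinal.{0}) : Prop := ω ^ x = x

theorem cnf_fst_lt {x : Ordinal.{0}} (h : ¬ ω ^ x = x) {p : Ordinal × Ordinal}
    (hp : p ∈ CNF ω x) : p.1 < x := by
  have hx : x ≠ 0 := by
    rintro rfl
    simp [Ordinal.CNF.zero_right] at hp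
  have h1 : p.1 ≤ Ordinal.log ω x := Ordinal.CNF.fst_le_log hp
  have h2 : Ordinal.log ω x < x := by
    rcases lt_or_eq_of_le (Ordinal.log_le_self ω x) with h' | h'
    · exact h'
    · exfalso
      have hle := Ordinal.opow_log_le_self ω hx
      rw [h'] at hle
      exact h (le_antisymm hle (Ordinal.right_le_opow x one_lt_omega0))
  exact lt_of_le_of_lt h1 h2

open scoped Classical in
/-- The set of epsilon numbers occurring hereditarily in the Cantor normal form of `x`. -/
noncomputable def Ep (x : Ordinal.{0}) : Set Ordinal.{0} :=
  if h : ω ^ x = x then {x}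
  else ⋃ p : {q // q ∈ CNF ω x}, Ep p.1.1
termination_by x
decreasing_by exact cnf_fst_lt h p.2

open scoped Classical in
/-- Simultaneous substitution of the epsilon numbers occurring hereditarily in the
Cantor normal form of `x` by their values under `f`. -/
noncomputable def subst (f : Ordinal.{0} → Ordinal.{0}) (x : Ordinal.{0}) : Ordinal.{0} :=
  if h : ω ^ x = x then f x
  else (((CNF ω x).attach).map (fun p => ω ^ subst f p.1.1 * p.1.2)).sum
termination_by x
decreasing_by exact cnf_fst_lt h p.2

theorem Ep_of_eps {x : Ordinal.{0}} (h : ω ^ x = x) : Ep x = {x} := by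
  rw [Ep, dif_pos h]

theorem Ep_subset {x : Ordinal.{0}} (h : ¬ ω ^ x = x) {p : Ordinal × Ordinal}
    (hp : p ∈ CNF ω x) : Ep p.1 ⊆ Ep x := by
  have h1 : Ep x = ⋃ q : {q // q ∈ CNF ω x}, Ep q.1.1 := by rw [Ep, dif_neg h]
  rw [h1]
  exact Set.subset_iUnion (fun q : {q // q ∈ CNF ω x} => Ep q.1.1) ⟨p, hp⟩

theorem subst_eps (f : Ordinal.{0} → Ordinal.{0}) {x : Ordinal.{0}} (h : ω ^ x = x) :
    subst f x = f x := by
  rw [subst, dif_pos h]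

theorem subst_not_eps (f : Ordinal.{0} → Ordinal.{0}) {x : Ordinal.{0}} (h : ¬ ω ^ x = x) :
    subst f x = ((CNF ω x).map (fun p => ω ^ subst f p.1 * p.2)).sum := by
  rw [subst, dif_neg h]
  exact congrArg List.sum
    (List.attach_map_val (l := CNF ω x) (f := fun p => ω ^ subst f p.1 * p.2))

theorem le_sum_of_mem {l : List Ordinal.{0}} {a : Ordinal.{0}} (h : a ∈ l) : a ≤ l.sum := by
  induction l with
  | nil => simp at h
  | cons b t ih =>
    rw [List.sum_cons]
    rcases List.mem_cons.1 h with rfl | h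
    · exact le_self_add
    · exact (ih h).trans le_add_self

theorem sum_lt_opow {c : Ordinal.{0}} {l : List Ordinal.{0}} (h : ∀ a ∈ l, a < ω ^ c) :
    l.sum < ω ^ c := by
  induction l with
  | nil => simpa using opow_pos c omega0_pos
  | cons b t ih =>
    rw [List.sum_cons]
    exact principal_add_omega0_opow c (h b (List.mem_cons_self))
      (ih fun a ha => h a (List.mem_cons_of_mem _ ha))

theorem sum_pos {l : List Ordinal.{0}} (hl : l ≠ []) (h : ∀ a ∈ l, 0 < a) : 0 < l.sum := by
  cases l with
  | nil => exact absurd rfl hl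
  | cons b t =>
    rw [List.sum_cons]
    exact lt_of_lt_of_le (h b (List.mem_cons_self)) le_self_add

/-- Each term of the substituted CNF sum is positive. -/
theorem subst_term_pos (f : Ordinal.{0} → Ordinal.{0}) {y : Ordinal.{0}}
    {q : Ordinal × Ordinal} (hq : q ∈ CNF ω y) : 0 < ω ^ subst f q.1 * q.2 :=
  mul_pos (opow_pos _ omega0_pos) (Ordinal.CNF.snd_pos hq)

/-- Key monotonicity lemma: if `e` is an epsilon number in `S` and `e < x`, then
`f e < subst f x`. -/
theorem lt_subst (S : Set Ordinal.{0}) (f : Ordinal → Ordinal)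
    (hfE : ∀ e ∈ S, IsEpsilon (f e)) (hf : StrictMonoOn f S) :
    ∀ x : Ordinal.{0}, Ep x ⊆ S → ∀ e, IsEpsilon e → e ∈ S →
      (e ≤ x → f e ≤ subst f x) ∧ (e < x → f e < subst f x) := by
  intro x
  induction x using Ordinal.induction with
  | h x IH =>
  intro hx e he heS
  by_cases hxe : ω ^ x = x
  · rw [subst_eps f hxe]
    have hxS : x ∈ S := hx (by rw [Ep_of_eps hxe]; rfl)
    constructor
    · intro h
      rcases h.lt_or_eq with h | rfl
      · exact (hf heS hxS h).le
      · rfl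
    · intro h
      exact hf heS hxS h
  · have key : e < x → f e < subst f x := by
      intro hlt
      have hx0 : x ≠ 0 := by
        rintro rfl
        exact absurd hlt (not_lt_zero (a := e))
      set L := Ordinal.log ω x with hLdef
      have hmem : (L, x / ω ^ L) ∈ CNF ω x := by
        rw [Ordinal.CNF.ne_zero hx0]
        exact List.mem_cons_self
      have hLx : L < x := cnf_fst_lt hxe hmem
      have hEpL : Ep L ⊆ S := (Ep_subset hxe hmem).trans hx
      have heL : e ≤ L := by
        have h1 : ω ^ e ≤ x := by rw [he]; exact hlt.le
        have h2 := Ordinal.log_mono_right ω h1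
        rwa [Ordinal.log_opow one_lt_omega0] at h2
      have hcpos : 0 < x / ω ^ L := Ordinal.CNF.snd_pos hmem
      rw [subst_not_eps f hxe, Ordinal.CNF.ne_zero hx0, List.map_cons, List.sum_cons]
      show f e < ω ^ subst f L * (x / ω ^ L) +
        ((CNF ω (x % ω ^ L)).map (fun p => ω ^ subst f p.1 * p.2)).sum
      rcases heL.lt_or_eq with hlt' | rfl
      · have h1 : f e < subst f L := (IH L hLx hEpL e he heS).2 hlt'
        have h2 : subst f L ≤ ω ^ subst f L := Ordinal.right_le_opow _ one_lt_omega0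
        have h3 : ω ^ subst f L ≤ ω ^ subst f L * (x / ω ^ L) :=
          Ordinal.le_mul_left _ hcpos
        exact lt_of_lt_of_le (lt_of_lt_of_le h1 (h2.trans h3)) le_self_add
      · -- e = L
        rw [subst_eps f he]
        have hfe : ω ^ f L = f L := hfE L heS
        rw [hfe]
        have hfepos : 0 < f L := by
          rw [← hfe]; exact opow_pos _ omega0_pos
        rcases eq_or_lt_of_le (Order.one_le_iff_pos.2 hcpos) with hc1 | hc2
        · -- coefficient is 1; then the remainder must be nonzero
          have hmod : x % ω ^ L ≠ 0 := by
            intro h0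
            have hxl := Ordinal.div_add_mod x (ω ^ L)
            rw [h0, add_zero, ← hc1, mul_one, he] at hxl
            apply hxe
            rw [← hxl, he, hxl]
          have hrest : 0 < ((CNF ω (x % ω ^ L)).map
              (fun p => ω ^ subst f p.1 * p.2)).sum := by
            apply sum_pos
            · intro h0
              rw [List.map_eq_nil_iff] at h0
              rw [Ordinal.CNF.ne_zero hmod] at h0
              exact List.cons_ne_nil _ _ h0
            · intro a ha
              obtain ⟨q, hq, rfl⟩ := List.mem_map.1 ha
              exact subst_term_pos f hq
          calc f L = f L * (x / ω ^ L) + 0 := by rw [← hc1, mul_one, add_zero]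
            _ < f L * (x / ω ^ L) + _ := by
                exact (add_lt_add_iff_left _).2 hrest
        · -- coefficient ≥ 2
          have h2 : f L + f L ≤ f L * (x / ω ^ L) := by
            have h4 : f L * (1 + 1) ≤ f L * (x / ω ^ L) := by
              apply mul_le_mul_right
              exact Order.add_one_le_of_lt hc2
            rwa [mul_add, mul_one] at h4
          have h3 : f L < f L + f L := by
            nth_rewrite 1 [← add_zero (f L)]
            exact (add_lt_add_iff_left _).2 hfepos
          exact lt_of_lt_of_le (lt_of_lt_of_le h3 h2) le_self_add
    refine ⟨fun hle => ?_, key⟩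
    rcases hle.lt_or_eq with h | rfl
    · exact (key h).le
    · exact absurd he hxe

theorem stmt2 (S : Set Ordinal.{0}) (f : Ordinal → Ordinal)
    (hS : ∀ e ∈ S, IsEpsilon e) (hfE : ∀ e ∈ S, IsEpsilon (f e))
    (hf : StrictMonoOn f S)
    (y : Ordinal) (hy : Ep y ⊆ S) :
    IsEpsilon y ↔ IsEpsilon (subst f y) := by
  revert hy
  induction y using Ordinal.induction with
  | h y IH =>
  intro hy
  constructor
  · intro h
    rw [subst_eps f h]
    exact hfE y (hy (by rw [Ep_of_eps h]; rfl))
  · intro hz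
    by_contra hxe
    have hxe : ¬ ω ^ y = y := hxe
    by_cases hy0 : y = 0
    · subst hy0
      rw [subst_not_eps f hxe, Ordinal.CNF.zero_right] at hz
      simp [IsEpsilon] at hz
    · -- y ≠ 0, not epsilon, but subst f y is epsilon
      set z := subst f y with hzdef
      have hz' : ω ^ z = z := hz
      have hsum : z = ((CNF ω y).map (fun p => ω ^ subst f p.1 * p.2)).sum :=
        subst_not_eps f hxe
      -- find a term of the sum which is ≥ z
      have hex : ∃ p ∈ CNF ω y, ω ^ z ≤ ω ^ subst f p.1 * p.2 := by
        by_contra hc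
        push_neg at hc
        have hlt : ((CNF ω y).map (fun p => ω ^ subst f p.1 * p.2)).sum < ω ^ z := by
          apply sum_lt_opow
          intro a ha
          obtain ⟨q, hq, rfl⟩ := List.mem_map.1 ha
          exact hc q hq
        rw [← hsum, hz'] at hlt
        exact lt_irrefl _ hlt
      obtain ⟨p, hp, hge⟩ := hex
      set a := subst f p.1 with hadef
      have hterm_le : ω ^ a * p.2 ≤ z := by
        rw [hsum]
        exact le_sum_of_mem (List.mem_map_of_mem hp)
      have hterm : ω ^ a * p.2 = z := le_antisymm hterm_le (by rwa [hz'] at hge)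
      have hc_lt : p.2 < ω := Ordinal.CNF.snd_lt one_lt_omega0 hp
      have hc_pos : 0 < p.2 := Ordinal.CNF.snd_pos hp
      -- z ≤ a
      have hza : z ≤ a := by
        have h1 : z < ω ^ (a + 1) := by
          rw [← hterm, Ordinal.add_one_eq_succ, opow_succ]
          exact mul_lt_mul_of_pos_left hc_lt (opow_pos _ omega0_pos)
        have h2 : ω ^ z < ω ^ (a + 1) := by rwa [hz']
        have h3 : z < a + 1 := (Ordinal.opow_lt_opow_iff_right one_lt_omega0).1 h2
        rwa [Ordinal.add_one_eq_succ, Order.lt_succ_iff] at h3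
      -- a ≤ z
      have haz : a ≤ z := by
        calc a ≤ ω ^ a := Ordinal.right_le_opow _ one_lt_omega0
          _ ≤ ω ^ a * p.2 := Ordinal.le_mul_left _ hc_pos
          _ = z := hterm
      have haeq : a = z := le_antisymm haz hza
      -- coefficient is 1
      have hwa : ω ^ a = z := by rw [haeq, hz']
      have hc1 : p.2 = 1 := by
        by_contra hne
        have hc2 : 1 < p.2 := lt_of_le_of_ne (Order.one_le_iff_pos.2 hc_pos)
          (fun h => hne h.symm)
        have h2 : ω ^ a + ω ^ a ≤ ω ^ a * p.2 := by
          have : ω ^ a * (1 + 1) ≤ ω ^ a * p.2 := by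
            apply mul_le_mul_right
            exact Order.add_one_le_of_lt hc2
          rwa [mul_add, mul_one] at this
        have h3 : ω ^ a < ω ^ a + ω ^ a := by
          nth_rewrite 1 [← add_zero (ω ^ a)]
          exact (add_lt_add_iff_left _).2 (opow_pos _ omega0_pos)
        rw [hterm, ← hwa] at h2
        exact absurd (lt_of_lt_of_le h3 h2) (lt_irrefl _)
      -- p.1 is an epsilon number in S, and f p.1 = z
      have hp1lt : p.1 < y := cnf_fst_lt hxe hp
      have hEp1 : Ep p.1 ⊆ S := (Ep_subset hxe hp).trans hy
      have hp1eps : IsEpsilon p.1 := (IH p.1 hp1lt hEp1).2 (by rw [← hadef] at *; rw [haeq]; exact hz)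
      have hp1S : p.1 ∈ S := hEp1 (by rw [Ep_of_eps hp1eps]; rfl)
      have hfp1 : f p.1 = z := by
        rw [← haeq, hadef, subst_eps f hp1eps]
      -- decompose CNF ω y as head :: tail
      set L := Ordinal.log ω y with hLdef
      have hcnf : CNF ω y = (L, y / ω ^ L) :: CNF ω (y % ω ^ L) :=
        Ordinal.CNF.ne_zero hy0
      have hp' := hp
      rw [hcnf] at hp'
      rcases List.mem_cons.1 hp' with hphead | hptail
      · -- p is the head term; show the tail is empty, hence y = ω ^ p.1 = p.1
        have hL : p.1 = L := by rw [hphead]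
        have hdiv : y / ω ^ L = 1 := by rw [← hc1, hphead]
        -- the tail sum must be 0
        have hrest0 : ((CNF ω (y % ω ^ L)).map (fun q => ω ^ subst f q.1 * q.2)).sum = 0 := by
          have h1 : z = ω ^ a * p.2 +
              ((CNF ω (y % ω ^ L)).map (fun q => ω ^ subst f q.1 * q.2)).sum := by
            rw [hsum, hcnf, List.map_cons, List.sum_cons, ← hphead]
          rw [hterm] at h1
          nth_rewrite 1 [← add_zero z] at h1
          exact (add_left_cancel h1).symm
        have hmod0 : y % ω ^ L = 0 := by
          by_contra hmod
          have : 0 < ((CNF ω (y % ω ^ L)).map (fun q => ω ^ subst f q.1 * q.2)).sum := by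
            apply sum_pos
            · intro h0
              rw [List.map_eq_nil_iff] at h0
              rw [Ordinal.CNF.ne_zero hmod] at h0
              exact List.cons_ne_nil _ _ h0
            · intro b hb
              obtain ⟨q, hq, rfl⟩ := List.mem_map.1 hb
              exact subst_term_pos f hq
          rw [hrest0] at this
          exact lt_irrefl _ this
        have hy_eq : y = ω ^ L := by
          have := Ordinal.div_add_mod y (ω ^ L)
          rw [hmod0, add_zero, hdiv, mul_one] at this
          exact this.symm
        -- but p.1 = L is epsilon, so y = ω ^ L = L and y is epsilon
        apply hxe
        rw [hL] at hp1eps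
        rw [hy_eq, hp1eps]
        exact hp1eps
      · -- p is in the tail: p.1 < L, contradiction via lt_subst
        have hmemL : (L, y / ω ^ L) ∈ CNF ω y := by rw [hcnf]; exact List.mem_cons_self
        have hEpL : Ep L ⊆ S := (Ep_subset hxe hmemL).trans hy
        have hp1L : p.1 < L := by
          have hsorted := (Ordinal.CNF.sortedGT ω y).pairwise
          rw [hcnf, List.map_cons] at hsorted
          exact List.rel_of_pairwise_cons hsorted (List.mem_map_of_mem hptail)
        have hkey : f p.1 < subst f L :=
          (lt_subst S f hfE hf L hEpL p.1 hp1eps hp1S).2 hp1L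
        -- the head term of the sum exceeds z, contradiction
        have hhead_le : ω ^ subst f L * (y / ω ^ L) ≤ z := by
          rw [hsum]
          exact le_sum_of_mem (List.mem_map_of_mem hmemL)
        have hhead_gt : z < ω ^ subst f L * (y / ω ^ L) := by
          have h1 : z < subst f L := by rw [← hfp1]; exact hkey
          have h2 : subst f L ≤ ω ^ subst f L := Ordinal.right_le_opow _ one_lt_omega0
          have h3 : ω ^ subst f L ≤ ω ^ subst f L * (y / ω ^ L) :=
            Ordinal.le_mul_left _ (Ordinal.CNF.snd_pos hmemL)
          exact lt_of_lt_of_le h1 (h2.trans h3)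
        exact absurd (lt_of_lt_of_le hhead_gt hhead_le) (lt_irrefl _)
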